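/- Let X be a connected nodal curve free from separating nodes. The number of curves C1-equivalent to X (up to isomorphism) is at most the product over all C1-sets S of 2^{#S−1}·(#S−1)!. -/
import Mathlib


/-! A combinatorial model for the curves C1-equivalent to a fixed nodal curve X free from
separating nodes. The C1-sets S of X are indexed by `ι`, and the C1-set indexed by `i` has
cardinality `h i`. The partial normalization Y_S at a C1-set S of cardinality n has n
connected components, each carrying two of the 2n gluing points; we model the gluing
points of S by `Fin n × Bool` (the two points (j, true), (j, false) lying on the j-th
component). A curve C1-equivalent to X is determined by a gluing datum for each C1-set:
a matching μ of the gluing points into nodes — a fixed-point-free involution — such that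
the resulting graph Γ_X(S) (vertices: the n components, joined by the strands of μ and by
the components themselves) is connected, i.e. a cycle. -/

/-- The involution exchanging the two gluing points on each connected component. -/
def flipPerm (n : ℕ) : Equiv.Perm (Fin n × Bool) :=
  Function.Involutive.toPerm (fun p => (p.1, !p.2)) (by intro p; simp)

/-- `μ` is an admissible gluing for a C1-set of cardinality `n`: a fixed-point-free
involution of the 2n gluing points such that gluing the n two-pointed components along μ
yields a connected (cycle) curve. -/
def IsAdmissibleGluing (n : ℕ) (μ : Equiv.Perm (Fin n × Bool)) : Prop :=
  (∀ p, μ (μ p) = p) ∧ (∀ p, μ p ≠ p) ∧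
    ∀ p q : Fin n × Bool,
      ∃ g ∈ Subgroup.closure ({μ, flipPerm n} : Set (Equiv.Perm (Fin n × Bool))), g p = q

namespace Stmt14Aux

lemma flip_apply {N : ℕ} (p : Fin N × Bool) : flipPerm N p = (p.1, !p.2) := rfl

lemma flip_flip {N : ℕ} (p : Fin N × Bool) : flipPerm N (flipPerm N p) = p := by
  simp [flip_apply]

lemma flip_mul_self (N : ℕ) : flipPerm N * flipPerm N = 1 :=
  Equiv.ext fun p => flip_flip p

lemma flip_inv (N : ℕ) : (flipPerm N)⁻¹ = flipPerm N :=
  inv_eq_of_mul_eq_one_right (flip_mul_self N)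

lemma two_point {N : ℕ} (p q : Fin N × Bool) (h : p.1 = q.1) :
    p = q ∨ p = flipPerm N q := by
  rcases p with ⟨a, b⟩; rcases q with ⟨c, d⟩
  cases b <;> cases d <;> simp_all [flip_apply]

variable {m : ℕ} {μ : Equiv.Perm (Fin (m + 1) × Bool)}

/-- The walk point `(flip∘μ)^k (0,false)`. -/
def wk (μ : Equiv.Perm (Fin (m + 1) × Bool)) (k : ℤ) : Fin (m + 1) × Bool :=
  ((flipPerm (m + 1) * μ) ^ k) ((0 : Fin (m + 1)), false)

lemma wk_zero : wk μ 0 = ((0 : Fin (m + 1)), false) := by simp [wk]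

lemma wk_add (a c : ℤ) : wk μ (a + c) = ((flipPerm (m + 1) * μ) ^ a) (wk μ c) := by
  rw [wk, wk, ← Equiv.Perm.mul_apply, ← zpow_add]

lemma wk_succ (k : ℤ) : wk μ (k + 1) = (flipPerm (m + 1) * μ) (wk μ k) := by
  rw [add_comm k 1, wk_add, zpow_one]

lemma wk_pred (k : ℤ) : wk μ (k - 1) = (flipPerm (m + 1) * μ)⁻¹ (wk μ k) := by
  rw [show k - 1 = -1 + k from by ring, wk_add, zpow_neg_one]

lemma wk_shift {a b : ℤ} (hab : wk μ a = wk μ b) : wk μ (a - b) = wk μ 0 := by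
  calc wk μ (a - b) = wk μ (-b + a) := by rw [show a - b = -b + a from by ring]
    _ = ((flipPerm (m + 1) * μ) ^ (-b)) (wk μ a) := wk_add _ _
    _ = ((flipPerm (m + 1) * μ) ^ (-b)) (wk μ b) := by rw [hab]
    _ = wk μ (-b + b) := (wk_add _ _).symm
    _ = wk μ 0 := by rw [neg_add_cancel]

lemma s_inv (hμ : IsAdmissibleGluing (m + 1) μ) :
    (flipPerm (m + 1) * μ)⁻¹ = μ * flipPerm (m + 1) := by
  refine inv_eq_of_mul_eq_one_right (Equiv.ext fun p => ?_)
  simp [Equiv.Perm.mul_apply, hμ.1, flip_flip]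

lemma semi (hμ : IsAdmissibleGluing (m + 1) μ) :
    SemiconjBy (flipPerm (m + 1)) (flipPerm (m + 1) * μ) (flipPerm (m + 1) * μ)⁻¹ := by
  unfold SemiconjBy
  rw [s_inv hμ]
  exact Equiv.ext fun p => by simp [Equiv.Perm.mul_apply, flip_flip]

lemma fpow (hμ : IsAdmissibleGluing (m + 1) μ) (k : ℤ) :
    flipPerm (m + 1) * (flipPerm (m + 1) * μ) ^ k
      = (flipPerm (m + 1) * μ) ^ (-k) * flipPerm (m + 1) := by
  have := (semi hμ).zpow_right k
  unfold SemiconjBy at this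
  rwa [inv_zpow, ← zpow_neg] at this

lemma s_flip (hμ : IsAdmissibleGluing (m + 1) μ) (x : Fin (m + 1) × Bool) :
    (flipPerm (m + 1) * μ) (flipPerm (m + 1) x)
      = flipPerm (m + 1) ((flipPerm (m + 1) * μ)⁻¹ x) := by
  rw [s_inv hμ]
  simp [Equiv.Perm.mul_apply]

/-- (A): the walk never meets the flip of the walk. -/
lemma wk_ne_flip (hμ : IsAdmissibleGluing (m + 1) μ) (k j : ℤ) :
    wk μ k ≠ flipPerm (m + 1) (wk μ j) := by
  have step : ∀ a b : ℤ, wk μ a = flipPerm (m + 1) (wk μ b) →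
      wk μ (a + 1) = flipPerm (m + 1) (wk μ (b - 1)) := by
    intro a b hab
    rw [wk_succ, hab, s_flip hμ, ← wk_pred]
  have chain : ∀ (c : ℕ) (a b : ℤ), wk μ a = flipPerm (m + 1) (wk μ b) →
      wk μ (a + c) = flipPerm (m + 1) (wk μ (b - c)) := by
    intro c
    induction c with
    | zero => intro a b hab; simpa using hab
    | succ c ih =>
        intro a b hab
        have h1 := step _ _ (ih a b hab)
        have e1 : a + ((c : ℕ) + 1 : ℕ) = (a + c) + 1 := by push_cast; ring
        have e2 : b - ((c : ℕ) + 1 : ℕ) = (b - c) - 1 := by push_cast; ring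
        rw [e1, e2]; exact h1
  have aux : ∀ a b : ℤ, a ≤ b → wk μ a = flipPerm (m + 1) (wk μ b) → False := by
    intro a b hle hab
    set d : ℕ := (b - a).toNat with hd
    have hdz : (d : ℤ) = b - a := Int.toNat_of_nonneg (sub_nonneg.2 hle)
    rcases Nat.even_or_odd d with ⟨c, hc⟩ | ⟨c, hc⟩
    · have h1 := chain c a b hab
      have hcz : (d : ℤ) = (c : ℤ) + c := by exact_mod_cast hc
      have hco : b - (c : ℤ) = a + c := by omega
      rw [hco] at h1
      have := congrArg Prod.snd h1
      simp [flip_apply] at this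
    · have h1 := chain c a b hab
      have hcz : (d : ℤ) = 2 * (c : ℤ) + 1 := by exact_mod_cast hc
      have hco : b - (c : ℤ) = (a + c) + 1 := by omega
      rw [hco, wk_succ, Equiv.Perm.mul_apply, flip_flip] at h1
      exact hμ.2.1 _ h1.symm
  intro hkj
  rcases le_total k j with hle | hle
  · exact aux k j hle hkj
  · refine aux j k hle ?_
    rw [hkj, flip_flip]

lemma closure_form (hμ : IsAdmissibleGluing (m + 1) μ) (g : Equiv.Perm (Fin (m + 1) × Bool))
    (hg : g ∈ Subgroup.closure ({μ, flipPerm (m + 1)} : Set (Equiv.Perm (Fin (m + 1) × Bool)))) :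
    ∃ k : ℤ, g = (flipPerm (m + 1) * μ) ^ k ∨
      g = (flipPerm (m + 1) * μ) ^ k * flipPerm (m + 1) := by
  refine Subgroup.closure_induction
    (p := fun g _ => ∃ k : ℤ, g = (flipPerm (m + 1) * μ) ^ k ∨
      g = (flipPerm (m + 1) * μ) ^ k * flipPerm (m + 1)) ?_ ?_ ?_ ?_ hg
  · intro x hx
    rcases hx with hx | hx
    · refine ⟨-1, Or.inr ?_⟩
      rw [hx, zpow_neg_one, s_inv hμ, mul_assoc, flip_mul_self, mul_one]
    · exact ⟨0, Or.inr (by simp [Set.mem_singleton_iff.mp hx])⟩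
  · exact ⟨0, Or.inl (by simp)⟩
  · rintro x y _ _ ⟨a, ha | ha⟩ ⟨b, hb | hb⟩
    · exact ⟨a + b, Or.inl (by rw [ha, hb, zpow_add])⟩
    · exact ⟨a + b, Or.inr (by rw [ha, hb, ← mul_assoc, ← zpow_add])⟩
    · refine ⟨a + -b, Or.inr ?_⟩
      rw [ha, hb, mul_assoc, fpow hμ b, ← mul_assoc, ← zpow_add]
    · refine ⟨a + -b, Or.inl ?_⟩
      rw [ha, hb, mul_assoc, ← mul_assoc (flipPerm (m + 1)), fpow hμ b,
        mul_assoc ((flipPerm (m + 1) * μ) ^ (-b)), flip_mul_self, mul_one, ← zpow_add]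
  · rintro x _ ⟨a, ha | ha⟩
    · exact ⟨-a, Or.inl (by rw [ha, ← zpow_neg])⟩
    · refine ⟨a, Or.inr ?_⟩
      rw [ha, mul_inv_rev, flip_inv, ← zpow_neg]
      have h2 := fpow hμ (-a)
      rw [neg_neg] at h2
      exact h2

/-- (B): every point is on the walk or its flip. -/
lemma covers (hμ : IsAdmissibleGluing (m + 1) μ) (q : Fin (m + 1) × Bool) :
    ∃ k : ℤ, q = wk μ k ∨ q = flipPerm (m + 1) (wk μ k) := by
  obtain ⟨g, hg, hgq⟩ := hμ.2.2 ((0 : Fin (m + 1)), false) q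
  obtain ⟨k, hk | hk⟩ := closure_form hμ g hg
  · exact ⟨k, Or.inl (by rw [← hgq, hk]; rfl)⟩
  · refine ⟨-k, Or.inr ?_⟩
    have h2 := fpow hμ (-k)
    rw [neg_neg] at h2
    rw [← hgq, hk, ← h2, Equiv.Perm.mul_apply]
    rfl

/-- reduce the walk index modulo a period. -/
lemma wk_mod (e : ℕ) (hper : wk μ (e : ℤ) = wk μ 0) (k : ℤ) :
    wk μ k = wk μ (k % e) := by
  have hfix : Function.IsFixedPt (⇑((flipPerm (m + 1) * μ) ^ (e : ℤ)))
      ((0 : Fin (m + 1)), false) := by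
    rw [wk_zero] at hper; exact hper
  have hall := hfix.perm_zpow (k / e)
  have h2 : wk μ ((e : ℤ) * (k / e)) = wk μ 0 := by
    rw [wk, zpow_mul, wk_zero]
    exact hall
  calc wk μ k = wk μ (k % e + (e : ℤ) * (k / e)) := by rw [Int.emod_add_mul_ediv k e]
    _ = ((flipPerm (m + 1) * μ) ^ (k % e)) (wk μ ((e : ℤ) * (k / e))) := wk_add _ _
    _ = ((flipPerm (m + 1) * μ) ^ (k % e)) (wk μ 0) := by rw [h2]
    _ = wk μ (k % e + 0) := (wk_add _ _).symm
    _ = wk μ (k % e) := by rw [add_zero]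

lemma period_ge (hμ : IsAdmissibleGluing (m + 1) μ) (e : ℕ) (he : 0 < e)
    (hper : wk μ (e : ℤ) = wk μ 0) : m + 1 ≤ e := by
  have hsurj : Function.Surjective
      (fun rb : Fin e × Bool =>
        cond rb.2 (flipPerm (m + 1) (wk μ (((rb.1 : ℕ) : ℤ)))) (wk μ (((rb.1 : ℕ) : ℤ)))) := by
    intro q
    obtain ⟨k, hk⟩ := covers hμ q
    have hmod := wk_mod e hper k
    have h0 : 0 ≤ k % e := Int.emod_nonneg k (by exact_mod_cast he.ne')
    have h1 : k % e < e := Int.emod_lt_of_pos k (by exact_mod_cast he)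
    have hcast : (((k % e).toNat : ℤ)) = k % e := Int.toNat_of_nonneg h0
    rcases hk with hk | hk
    · refine ⟨(⟨(k % e).toNat, by omega⟩, false), ?_⟩
      show wk μ (((k % (e : ℤ)).toNat : ℕ) : ℤ) = q
      rw [hcast, hk]
      exact hmod.symm
    · refine ⟨(⟨(k % e).toNat, by omega⟩, true), ?_⟩
      show flipPerm (m + 1) (wk μ (((k % (e : ℤ)).toNat : ℕ) : ℤ)) = q
      rw [hcast, hk]
      exact congrArg _ hmod.symm
  have hcard := Fintype.card_le_of_surjective _ hsurj
  simp only [Fintype.card_prod, Fintype.card_fin, Fintype.card_bool] at hcard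
  omega

/-- (C): first coordinates of the walk are distinct over one period. -/
lemma fst_inj (hμ : IsAdmissibleGluing (m + 1) μ) {j k : ℤ}
    (h0 : 0 ≤ j) (hjk : j < k) (hk : k < m + 1) :
    (wk μ j).1 ≠ (wk μ k).1 := by
  intro heq
  rcases two_point _ _ heq with h | h
  · have hper := wk_shift h.symm
    have hcast : ((k - j).toNat : ℤ) = k - j := Int.toNat_of_nonneg (by omega)
    have := period_ge hμ (k - j).toNat (by omega) (by rw [hcast]; exact hper)
    omega
  · exact wk_ne_flip hμ j k h

/-- (D): the walk closes up after m+1 steps. -/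
lemma wk_top (hμ : IsAdmissibleGluing (m + 1) μ) :
    wk μ ((m : ℤ) + 1) = wk μ 0 := by
  have hinj : Function.Injective (fun j : Fin (m + 1) => (wk μ (j : ℤ)).1) := by
    intro a b hab
    by_contra hne
    rcases lt_trichotomy ((a : ℕ) : ℤ) ((b : ℕ) : ℤ) with hlt | heq | hlt
    · exact fst_inj hμ (by positivity) hlt (by exact_mod_cast b.isLt) hab
    · exact hne (Fin.ext (by exact_mod_cast heq))
    · exact fst_inj hμ (by positivity) hlt (by exact_mod_cast a.isLt) hab.symm
  obtain ⟨j, hj⟩ := Finite.surjective_of_injective hinj ((wk μ ((m : ℤ) + 1)).1)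
  rcases two_point _ _ hj with h | h
  · -- h : wk μ j = wk μ (m+1)
    have hper := wk_shift h.symm
    have hjm : (j : ℤ) ≤ m := by exact_mod_cast Fin.is_le j
    have hcast : ((((m : ℤ) + 1 - (j : ℤ))).toNat : ℤ) = (m : ℤ) + 1 - (j : ℤ) := by
      omega
    have hge := period_ge hμ ((m : ℤ) + 1 - (j : ℤ)).toNat (by omega)
      (by rw [hcast]; exact hper)
    have hj0 : (j : ℤ) = 0 := by omega
    have : (m : ℤ) + 1 - (j : ℤ) = (m : ℤ) + 1 := by omega
    rw [this] at hper
    exact hper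
  · exact absurd h (wk_ne_flip hμ _ _)

/-- bounded coverage. -/
lemma cover' (hμ : IsAdmissibleGluing (m + 1) μ) (q : Fin (m + 1) × Bool) :
    ∃ k : ℕ, k < m + 1 ∧ (q = wk μ (k : ℤ) ∨ q = flipPerm (m + 1) (wk μ (k : ℤ))) := by
  obtain ⟨k, hk⟩ := covers hμ q
  have htop : wk μ ((m + 1 : ℕ) : ℤ) = wk μ 0 := by
    push_cast; exact wk_top hμ
  have hmod := wk_mod (m + 1) htop k
  have h0 : 0 ≤ k % (m + 1 : ℕ) := Int.emod_nonneg k (by positivity)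
  have h1 : k % (m + 1 : ℕ) < (m + 1 : ℕ) := Int.emod_lt_of_pos k (by positivity)
  refine ⟨(k % (m + 1 : ℕ)).toNat, by omega, ?_⟩
  have hcast : (((k % (m + 1 : ℕ)).toNat : ℤ)) = k % (m + 1 : ℕ) := Int.toNat_of_nonneg h0
  rw [hcast]
  rcases hk with hk | hk
  · exact Or.inl (by rw [hk, hmod])
  · exact Or.inr (by rw [hk, hmod])

/-- Reconstruction: μ is determined by the walk over one period. -/
lemma mu_determined {μ' : Equiv.Perm (Fin (m + 1) × Bool)}
    (hμ : IsAdmissibleGluing (m + 1) μ) (hμ' : IsAdmissibleGluing (m + 1) μ')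
    (hsame : ∀ k : ℤ, 0 ≤ k → k ≤ m + 1 → wk μ k = wk μ' k) : μ = μ' := by
  have htop : wk μ ((m + 1 : ℕ) : ℤ) = wk μ 0 := by push_cast; exact wk_top hμ
  have htop' : wk μ' ((m + 1 : ℕ) : ℤ) = wk μ' 0 := by push_cast; exact wk_top hμ'
  have hs : (flipPerm (m + 1) * μ) = (flipPerm (m + 1) * μ') := by
    apply Equiv.ext; intro q
    obtain ⟨k, hk, hq | hq⟩ := cover' hμ q
    · subst hq
      rw [← wk_succ]
      have h1 : wk μ (k : ℤ) = wk μ' (k : ℤ) := hsame _ (by positivity) (by omega)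
      rw [h1, ← wk_succ]
      exact hsame _ (by positivity) (by omega)
    · subst hq
      have h1 : wk μ (k : ℤ) = wk μ' (k : ℤ) := hsame _ (by positivity) (by omega)
      rw [s_flip hμ, ← wk_pred, h1, s_flip hμ', ← wk_pred]
      have e1 := wk_mod (m + 1) htop ((k : ℤ) - 1)
      have e2 := wk_mod (m + 1) htop' ((k : ℤ) - 1)
      rw [e1, e2]
      have h0 : 0 ≤ ((k : ℤ) - 1) % (m + 1 : ℕ) :=
        Int.emod_nonneg _ (by positivity)
      have h2 : ((k : ℤ) - 1) % (m + 1 : ℕ) < (m + 1 : ℕ) :=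
        Int.emod_lt_of_pos _ (by positivity)
      exact congrArg _ (hsame _ h0 (by push_cast at h2 ⊢; omega))
  calc μ = flipPerm (m + 1) * (flipPerm (m + 1) * μ) := by
        rw [← mul_assoc, flip_mul_self, one_mul]
    _ = flipPerm (m + 1) * (flipPerm (m + 1) * μ') := by rw [hs]
    _ = μ' := by rw [← mul_assoc, flip_mul_self, one_mul]


lemma fst_inj' (hμ : IsAdmissibleGluing (m + 1) μ) {j k : ℕ}
    (hjk : j ≠ k) (hj : j < m + 1) (hk : k < m + 1) :
    (wk μ (j : ℤ)).1 ≠ (wk μ (k : ℤ)).1 := by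
  rcases Nat.lt_or_ge j k with hlt | hge
  · exact fst_inj hμ (by positivity) (by exact_mod_cast hlt) (by exact_mod_cast hk)
  · have hlt : k < j := by omega
    exact fun hc =>
      (fst_inj hμ (by positivity) (by exact_mod_cast hlt) (by exact_mod_cast hj)) hc.symm

/-- The count of admissible gluings for a C1-set of size m+1. -/
lemma card_adm (m : ℕ) :
    Nat.card {μ : Equiv.Perm (Fin (m + 1) × Bool) // IsAdmissibleGluing (m + 1) μ}
      ≤ 2 ^ m * Nat.factorial m := by
  classical
  have hne0 : ∀ (μ : Equiv.Perm (Fin (m + 1) × Bool)),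
      IsAdmissibleGluing (m + 1) μ →
      ∀ k : Fin m, (wk μ ((((k : ℕ) + 1 : ℕ)) : ℤ)).1 ≠ 0 := by
    intro μ hμ k h0
    refine fst_inj' hμ (j := 0) (k := (k : ℕ) + 1) (by omega) (by omega) (by omega) ?_
    rw [h0]
    simp [wk_zero]
  let Φ : {μ : Equiv.Perm (Fin (m + 1) × Bool) // IsAdmissibleGluing (m + 1) μ} →
      (Fin m ↪ Fin m) × (Fin m → Bool) := fun x =>
    (⟨fun k : Fin m => ((wk x.1 ((((k : ℕ) + 1 : ℕ)) : ℤ)).1).pred (hne0 x.1 x.2 k), by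
        intro a b hab
        by_contra hne
        have hval : (a : ℕ) ≠ (b : ℕ) := fun hc => hne (Fin.ext hc)
        exact fst_inj' x.2 (j := (a : ℕ) + 1) (k := (b : ℕ) + 1)
          (by omega) (by omega) (by omega) (Fin.pred_inj.mp hab)⟩,
      fun k => (wk x.1 ((((k : ℕ) + 1 : ℕ)) : ℤ)).2)
  have hΦ : Function.Injective Φ := by
    intro x y hxy
    have hemb := congrArg Prod.fst hxy
    have hbool := congrArg Prod.snd hxy
    simp only [Φ] at hemb hbool
    have hpt : ∀ k : Fin m, wk x.1 ((((k : ℕ) + 1 : ℕ)) : ℤ)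
        = wk y.1 ((((k : ℕ) + 1 : ℕ)) : ℤ) := by
      intro k
      have h1 : ((wk x.1 ((((k : ℕ) + 1 : ℕ)) : ℤ)).1).pred (hne0 x.1 x.2 k)
          = ((wk y.1 ((((k : ℕ) + 1 : ℕ)) : ℤ)).1).pred (hne0 y.1 y.2 k) :=
        DFunLike.congr_fun hemb k
      have hfst := Fin.pred_inj.mp h1
      have hsnd : (wk x.1 ((((k : ℕ) + 1 : ℕ)) : ℤ)).2
          = (wk y.1 ((((k : ℕ) + 1 : ℕ)) : ℤ)).2 := congrFun hbool k
      exact Prod.ext hfst hsnd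
    have hsame : ∀ k : ℤ, 0 ≤ k → k ≤ m + 1 → wk x.1 k = wk y.1 k := by
      intro k hk0 hkm
      set t : ℕ := k.toNat with ht
      have htz : (t : ℤ) = k := Int.toNat_of_nonneg hk0
      rcases Nat.eq_zero_or_pos t with h0 | hpos
      · have : k = 0 := by omega
        rw [this, wk_zero, wk_zero]
      · rcases Nat.lt_or_ge t (m + 1) with hlt | hge
        · have hkk : t - 1 < m := by omega
          have h1 := hpt ⟨t - 1, hkk⟩
          have he : (((t - 1 : ℕ) + 1 : ℕ) : ℤ) = k := by push_cast; omega
          rwa [he] at h1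
        · have hte : t = m + 1 := by omega
          have hk1 : k = ((m + 1 : ℕ) : ℤ) := by push_cast; omega
          rw [hk1]
          have e1 : wk x.1 ((m + 1 : ℕ) : ℤ) = wk x.1 0 := by
            push_cast; exact wk_top x.2
          have e2 : wk y.1 ((m + 1 : ℕ) : ℤ) = wk y.1 0 := by
            push_cast; exact wk_top y.2
          rw [e1, e2, wk_zero, wk_zero]
    exact Subtype.ext (mu_determined x.2 y.2 hsame)
  have hle := Nat.card_le_card_of_injective Φ hΦ
  have hc : Nat.card ((Fin m ↪ Fin m) × (Fin m → Bool)) = 2 ^ m * Nat.factorial m := by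
    rw [Nat.card_eq_fintype_card, Fintype.card_prod, Fintype.card_embedding_eq,
      Fintype.card_fin, Nat.descFactorial_self, Fintype.card_fun, Fintype.card_bool,
      Fintype.card_fin, mul_comm]
  rwa [hc] at hle

end Stmt14Aux

/-- Let X be a connected nodal curve free from separating nodes, with
C1-sets of cardinalities h i (i ∈ ι). Since every curve C1-equivalent to X is determined
(up to isomorphism) by a choice, for each C1-set S, of an admissible gluing of its
gluing points, the number of curves C1-equivalent to X is at most
∏_S 2^{#S−1}·(#S−1)!. -/
theorem stmt14 {ι : Type} [Fintype ι] (h : ι → ℕ) (hpos : ∀ i, 1 ≤ h i)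
    (C : Type) (f : C → ∀ i, {μ : Equiv.Perm (Fin (h i) × Bool) // IsAdmissibleGluing (h i) μ})
    (hf : Function.Injective f) :
    Nat.card C ≤ ∏ i, 2 ^ (h i - 1) * Nat.factorial (h i - 1) := by
  classical
  have h1 : Nat.card C
      ≤ Nat.card (∀ i, {μ : Equiv.Perm (Fin (h i) × Bool) // IsAdmissibleGluing (h i) μ}) :=
    Nat.card_le_card_of_injective f hf
  rw [Nat.card_pi] at h1
  refine h1.trans (Finset.prod_le_prod' fun i _ => ?_)
  obtain ⟨m, hm⟩ : ∃ m, h i = m + 1 := ⟨h i - 1, by have := hpos i; omega⟩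
  rw [hm]
  simpa using Stmt14Aux.card_adm m
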